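/- Let g be an integrable function on ℝ with ∫ g dx > 0, and let α > 0. Then for every s > 0 there exists f ∈ H¹(ℝ) with ‖f‖²_{L²} = s and ∫ ((f')² − α f² g) dx < 0. -/

import Mathlib

open MeasureTheory

noncomputable section

def H1R (g : ℝ → ℝ) : Prop :=
  Differentiable ℝ g ∧ MemLp g 2 ∧ MemLp (deriv g) 2

open Real Filter

lemma integrable_sq_mul_exp (b : ℝ) (hb : 0 < b) :
    Integrable (fun x : ℝ => x ^ 2 * Real.exp (-b * x ^ 2)) := by
  have h := integrable_rpow_mul_exp_neg_mul_sq hb (by norm_num : (-1:ℝ) < 2)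
  simp_rw [rpow_two] at h
  exact h

lemma aux_main (g : ℝ → ℝ) (hg : Integrable g) (α s θ : ℝ) (hs : 0 < s) (hθ : 0 < θ) :
    H1R (fun x => Real.sqrt (s * θ * Real.sqrt (2 / π)) * Real.exp (-θ ^ 2 * x ^ 2)) ∧
    (∫ x : ℝ, ((fun x => Real.sqrt (s * θ * Real.sqrt (2 / π)) * Real.exp (-θ ^ 2 * x ^ 2)) x) ^ 2) = s ∧
    Integrable (fun x => (deriv (fun x => Real.sqrt (s * θ * Real.sqrt (2 / π)) * Real.exp (-θ ^ 2 * x ^ 2)) x) ^ 2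
      - α * ((fun x => Real.sqrt (s * θ * Real.sqrt (2 / π)) * Real.exp (-θ ^ 2 * x ^ 2)) x) ^ 2 * g x) ∧
    (∫ x : ℝ, ((deriv (fun x => Real.sqrt (s * θ * Real.sqrt (2 / π)) * Real.exp (-θ ^ 2 * x ^ 2)) x) ^ 2
      - α * ((fun x => Real.sqrt (s * θ * Real.sqrt (2 / π)) * Real.exp (-θ ^ 2 * x ^ 2)) x) ^ 2 * g x)) =
      s * θ * Real.sqrt (2 / π) *
        (4 * (∫ u : ℝ, u ^ 2 * Real.exp (-2 * u ^ 2)) * θ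
          - α * ∫ x : ℝ, Real.exp (-(2 * θ ^ 2) * x ^ 2) * g x) := by
  have hπ : (0:ℝ) < π := pi_pos
  set a : ℝ := Real.sqrt (s * θ * Real.sqrt (2 / π)) with ha
  set f : ℝ → ℝ := fun x => a * Real.exp (-θ ^ 2 * x ^ 2) with hfdef
  have ha2 : a ^ 2 = s * θ * Real.sqrt (2 / π) := Real.sq_sqrt (by positivity)
  -- derivative
  have hD : ∀ x : ℝ, HasDerivAt f (a * (Real.exp (-θ ^ 2 * x ^ 2) * (-θ ^ 2 * (2 * x)))) x := by
    intro x
    have h1 : HasDerivAt (fun x : ℝ => -θ ^ 2 * x ^ 2) (-θ ^ 2 * (2 * x)) x := by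
      simpa using (hasDerivAt_pow 2 x).const_mul (-θ ^ 2)
    exact h1.exp.const_mul a
  have hderiv : deriv f = fun x => a * (Real.exp (-θ ^ 2 * x ^ 2) * (-θ ^ 2 * (2 * x))) :=
    funext fun x => (hD x).deriv
  have hfsq : ∀ x : ℝ, f x ^ 2 = a ^ 2 * Real.exp (-(2 * θ ^ 2) * x ^ 2) := by
    intro x
    have he : Real.exp (-θ ^ 2 * x ^ 2) * Real.exp (-θ ^ 2 * x ^ 2)
        = Real.exp (-(2 * θ ^ 2) * x ^ 2) := by
      rw [← Real.exp_add]; congr 1; ring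
    calc f x ^ 2 = a ^ 2 * (Real.exp (-θ ^ 2 * x ^ 2) * Real.exp (-θ ^ 2 * x ^ 2)) := by
            simp only [hfdef]; ring
      _ = a ^ 2 * Real.exp (-(2 * θ ^ 2) * x ^ 2) := by rw [he]
  have hdsq : ∀ x : ℝ, (deriv f x) ^ 2
      = (a ^ 2 * (4 * θ ^ 4)) * (x ^ 2 * Real.exp (-(2 * θ ^ 2) * x ^ 2)) := by
    intro x
    have he : Real.exp (-θ ^ 2 * x ^ 2) * Real.exp (-θ ^ 2 * x ^ 2)
        = Real.exp (-(2 * θ ^ 2) * x ^ 2) := by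
      rw [← Real.exp_add]; congr 1; ring
    rw [hderiv]
    calc (a * (Real.exp (-θ ^ 2 * x ^ 2) * (-θ ^ 2 * (2 * x)))) ^ 2
        = (a ^ 2 * (4 * θ ^ 4)) * (x ^ 2 * (Real.exp (-θ ^ 2 * x ^ 2) * Real.exp (-θ ^ 2 * x ^ 2))) := by
          ring
      _ = _ := by rw [he]
  have hb : (0:ℝ) < 2 * θ ^ 2 := by positivity
  have hIexp : Integrable (fun x : ℝ => Real.exp (-(2 * θ ^ 2) * x ^ 2)) :=
    integrable_exp_neg_mul_sq hb
  have hIfsq : Integrable (fun x : ℝ => f x ^ 2) :=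
    (hIexp.const_mul (a ^ 2)).congr (Filter.Eventually.of_forall fun x => (hfsq x).symm)
  have hIdsq : Integrable (fun x : ℝ => (deriv f x) ^ 2) :=
    ((integrable_sq_mul_exp (2 * θ ^ 2) hb).const_mul (a ^ 2 * (4 * θ ^ 4))).congr
      (Filter.Eventually.of_forall fun x => (hdsq x).symm)
  have hfc : Continuous f := by fun_prop
  have hdc : Continuous (deriv f) := by rw [hderiv]; fun_prop
  -- integrability of the product term
  have hIfg : Integrable (fun x : ℝ => α * f x ^ 2 * g x) := by
    apply hg.bdd_mul (c := |α| * a ^ 2) ((continuous_const.mul (hfc.pow 2)).aestronglyMeasurable)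
    refine Filter.Eventually.of_forall fun x => ?_
    show ‖α * f x ^ 2‖ ≤ |α| * a ^ 2
    rw [Real.norm_eq_abs, abs_mul]
    have h1 : |f x ^ 2| = a ^ 2 * Real.exp (-(2 * θ ^ 2) * x ^ 2) := by
      rw [abs_of_nonneg (sq_nonneg _), hfsq x]
    rw [h1]
    have h2 : Real.exp (-(2 * θ ^ 2) * x ^ 2) ≤ 1 :=
      Real.exp_le_one_iff.2 (by nlinarith [sq_nonneg x])
    calc |α| * (a ^ 2 * Real.exp (-(2 * θ ^ 2) * x ^ 2)) ≤ |α| * (a ^ 2 * 1) := by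
          apply mul_le_mul_of_nonneg_left _ (abs_nonneg α)
          exact mul_le_mul_of_nonneg_left h2 (sq_nonneg a)
      _ = |α| * a ^ 2 := by ring
  have hIsub : Integrable (fun x : ℝ => (deriv f x) ^ 2 - α * f x ^ 2 * g x) := hIdsq.sub hIfg
  -- ∫ f² = s
  have hsq2 : Real.sqrt (2 / π) * Real.sqrt (π / (2 * θ ^ 2)) = θ⁻¹ := by
    rw [← Real.sqrt_mul (by positivity)]
    rw [show (2 / π) * (π / (2 * θ ^ 2)) = (θ⁻¹) ^ 2 by field_simp]
    exact Real.sqrt_sq (by positivity)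
  have E1 : (∫ x : ℝ, f x ^ 2) = s := by
    rw [integral_congr_ae (Filter.Eventually.of_forall hfsq), integral_const_mul,
      integral_gaussian, ha2]
    rw [mul_assoc, hsq2]
    field_simp
  -- ∫ (f')² value
  have hcomp := MeasureTheory.Measure.integral_comp_mul_left
    (fun u : ℝ => u ^ 2 * Real.exp (-2 * u ^ 2)) θ
  have e : ∀ x : ℝ, (θ * x) ^ 2 * Real.exp (-2 * (θ * x) ^ 2)
      = θ ^ 2 * (x ^ 2 * Real.exp (-(2 * θ ^ 2) * x ^ 2)) := by
    intro x
    rw [show -2 * (θ * x) ^ 2 = -(2 * θ ^ 2) * x ^ 2 by ring]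
    ring
  simp_rw [e] at hcomp
  rw [integral_const_mul, smul_eq_mul, abs_of_pos (inv_pos.2 hθ)] at hcomp
  have hJ : (∫ x : ℝ, x ^ 2 * Real.exp (-(2 * θ ^ 2) * x ^ 2))
      = (∫ u : ℝ, u ^ 2 * Real.exp (-2 * u ^ 2)) / θ ^ 3 := by
    have hθ2 : (θ:ℝ) ^ 2 ≠ 0 := by positivity
    field_simp at hcomp ⊢
    rw [← hcomp]; congr 1
    exact integral_congr_ae (Filter.Eventually.of_forall fun x => by ring_nf)
  have E2 : (∫ x : ℝ, (deriv f x) ^ 2)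
      = s * θ * Real.sqrt (2 / π) * (4 * (∫ u : ℝ, u ^ 2 * Real.exp (-2 * u ^ 2)) * θ) := by
    rw [integral_congr_ae (Filter.Eventually.of_forall hdsq), integral_const_mul, hJ, ha2]
    field_simp
  have E3 : (∫ x : ℝ, α * f x ^ 2 * g x)
      = α * (s * θ * Real.sqrt (2 / π)) * (∫ x : ℝ, Real.exp (-(2 * θ ^ 2) * x ^ 2) * g x) := by
    have : ∀ x : ℝ, α * f x ^ 2 * g x
        = (α * a ^ 2) * (Real.exp (-(2 * θ ^ 2) * x ^ 2) * g x) := by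
      intro x; rw [hfsq x]; ring
    rw [integral_congr_ae (Filter.Eventually.of_forall this), integral_const_mul, ha2]
  refine ⟨⟨fun x => (hD x).differentiableAt, ?_, ?_⟩, E1, hIsub, ?_⟩
  · exact (memLp_two_iff_integrable_sq hfc.aestronglyMeasurable).2 hIfsq
  · exact (memLp_two_iff_integrable_sq hdc.aestronglyMeasurable).2 hIdsq
  · rw [integral_sub hIdsq hIfg, E2, E3]
    ring

theorem exists_f_neg_quadratic_form (g : ℝ → ℝ) (hg : Integrable g)
    (hgpos : 0 < ∫ x : ℝ, g x) (α : ℝ) (hα : 0 < α) (s : ℝ) (hs : 0 < s) :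
    ∃ f : ℝ → ℝ, H1R f ∧ (∫ x : ℝ, (f x) ^ 2) = s ∧
      Integrable (fun x => (deriv f x) ^ 2 - α * (f x) ^ 2 * g x) ∧
      (∫ x : ℝ, ((deriv f x) ^ 2 - α * (f x) ^ 2 * g x)) < 0 := by
  set K : ℝ := ∫ u : ℝ, u ^ 2 * Real.exp (-2 * u ^ 2) with hK
  obtain ⟨θ, hθ, hθneg⟩ : ∃ θ : ℝ, 0 < θ ∧
      4 * K * θ - α * (∫ x : ℝ, Real.exp (-(2 * θ ^ 2) * x ^ 2) * g x) < 0 := by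
    set θn : ℕ → ℝ := fun n => 1 / (n + 1) with hθn
    have hθpos : ∀ n, 0 < θn n := fun n => by positivity
    have hθ0 : Tendsto θn atTop (nhds 0) := tendsto_one_div_add_atTop_nhds_zero_nat
    have hI : Tendsto (fun n => ∫ x : ℝ, Real.exp (-(2 * (θn n) ^ 2) * x ^ 2) * g x) atTop
        (nhds (∫ x : ℝ, g x)) := by
      apply tendsto_integral_of_dominated_convergence (fun x => |g x|)
      · intro n
        exact (Continuous.aestronglyMeasurable (by fun_prop)).mul hg.1
      · exact hg.abs
      · intro n
        refine Filter.Eventually.of_forall fun x => ?_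
        rw [Real.norm_eq_abs, abs_mul]
        have h2 : |Real.exp (-(2 * (θn n) ^ 2) * x ^ 2)| ≤ 1 := by
          rw [abs_of_pos (Real.exp_pos _)]
          exact Real.exp_le_one_iff.2 (by nlinarith [sq_nonneg x, sq_nonneg (θn n)])
        calc |Real.exp (-(2 * (θn n) ^ 2) * x ^ 2)| * |g x| ≤ 1 * |g x| :=
              mul_le_mul_of_nonneg_right h2 (abs_nonneg _)
          _ = |g x| := one_mul _
      · refine Filter.Eventually.of_forall fun x => ?_
        have h1 : Tendsto (fun n => -(2 * (θn n) ^ 2) * x ^ 2) atTop (nhds 0) := by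
          have := ((hθ0.mul hθ0).const_mul (2:ℝ)).neg.mul_const (x ^ 2)
          simpa [pow_two] using this
        have h2 : Tendsto (fun n => Real.exp (-(2 * (θn n) ^ 2) * x ^ 2)) atTop (nhds 1) := by
          simpa [Function.comp_def] using (Real.continuous_exp.tendsto 0).comp h1
        simpa using h2.mul_const (g x)
    have hlim : Tendsto
        (fun n => 4 * K * θn n - α * (∫ x : ℝ, Real.exp (-(2 * (θn n) ^ 2) * x ^ 2) * g x))
        atTop (nhds (4 * K * 0 - α * ∫ x : ℝ, g x)) :=
      (hθ0.const_mul (4 * K)).sub (hI.const_mul α)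
    have hneg : 4 * K * 0 - α * (∫ x : ℝ, g x) < 0 := by
      simpa using mul_pos hα hgpos
    obtain ⟨n, hn⟩ := (hlim.eventually (eventually_lt_nhds hneg)).exists
    exact ⟨θn n, hθpos n, hn⟩
  obtain ⟨h1, h2, h3, h4⟩ := aux_main g hg α s θ hs hθ
  refine ⟨_, h1, h2, h3, ?_⟩
  rw [h4]
  apply mul_neg_of_pos_of_neg
  · have := Real.pi_pos
    positivity
  · exact hθneg
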